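/- Let y_1 > ⋯ > y_{m'} > 0 with multiplicities μ, and let 𝒫_y be its two-partition set. Suppose real variables P^r_{ij} ∈ [0,1] (for intervals i < j and r ∈ {1,…,m'}) and T^{rst}_{ijk} ∈ [0,1] (for refinements i < j < k and (r,s,t) ∈ 𝒫_y) satisfy the linear constraints: Σ_r P^r_{ij} = 1 for each interval; Σ_{(r,s,t)∈𝒫_y} T^{rst}_{ijk} = 1 for each refinement; and the marginalization identities P^r_{ij} = Σ_{(r,s,t)∈𝒫_y} T^{rst}_{ijk}, P^s_{jk} = Σ_{(r,s,t)∈𝒫_y} T^{rst}_{ijk}, P^t_{ik} = Σ_{(r,s,t)∈𝒫_y} T^{rst}_{ijk} for each refinement and each index. Define ρ^{(P)}_{ij} := Σ_{r=1}^{m'} y_r P^r_{ij} for i < j, ρ^{(P)}_{ii} = 0, and ρ^{(P)}_{ji} = −ρ^{(P)}_{ij}. Then ρ^{(P)}_{ik} = ρ^{(P)}_{ij} + ρ^{(P)}_{jk} for all i < j < k, and consequently there exists x ∈ ℝⁿ, unique up to translation, with ρ^{(P)}_{ij} = x_j − x_i for all i, j. -/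
import Mathlib


open scoped Classical

/-- The two-partition set `𝒫_y = {(r,s,t) : y_r + y_s = y_t, with μ_r ≥ 2 when r = s}`. -/
noncomputable def twoPartitions {m' : ℕ} (y : Fin m' → ℝ) (μ : Fin m' → ℕ) :
    Finset (Fin m' × Fin m' × Fin m') :=
  Finset.univ.filter
    (fun rst => y rst.1 + y rst.2.1 = y rst.2.2 ∧ (rst.1 ≠ rst.2.1 ∨ 2 ≤ μ rst.1))

/-- Any (possibly fractional) feasible solution `(P, T)` of the
triangle-based LP relaxation induces, via `ρ^{(P)}_{ij} = Σ_r y_r P^r_{ij}`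
(extended by zero diagonal and skew-symmetry), a matrix satisfying all triangle
equalities on `i < j < k`; consequently there exists `x ∈ ℝⁿ`, unique up to
translation, with `ρ^{(P)}_{ij} = x_j - x_i` for all `i, j`. -/
theorem lp_solution_induces_ruler (n m' : ℕ) (y : Fin m' → ℝ) (μ : Fin m' → ℕ)
    (hy : StrictAnti y) (hpos : ∀ r, 0 < y r) (hμ : ∀ r, 1 ≤ μ r)
    (P : Fin n → Fin n → Fin m' → ℝ)
    (T : Fin n → Fin n → Fin n → Fin m' × Fin m' × Fin m' → ℝ)
    (hPrange : ∀ i j : Fin n, i < j → ∀ r : Fin m', 0 ≤ P i j r ∧ P i j r ≤ 1)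
    (hTrange : ∀ i j k : Fin n, i < j → j < k → ∀ rst ∈ twoPartitions y μ,
      0 ≤ T i j k rst ∧ T i j k rst ≤ 1)
    (hPsum : ∀ i j : Fin n, i < j → ∑ r : Fin m', P i j r = 1)
    (hTsum : ∀ i j k : Fin n, i < j → j < k →
      ∑ rst ∈ twoPartitions y μ, T i j k rst = 1)
    (hMargR : ∀ i j k : Fin n, i < j → j < k → ∀ r : Fin m',
      P i j r = ∑ rst ∈ (twoPartitions y μ).filter (fun rst => rst.1 = r),
        T i j k rst)
    (hMargS : ∀ i j k : Fin n, i < j → j < k → ∀ s : Fin m',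
      P j k s = ∑ rst ∈ (twoPartitions y μ).filter (fun rst => rst.2.1 = s),
        T i j k rst)
    (hMargT : ∀ i j k : Fin n, i < j → j < k → ∀ t : Fin m',
      P i k t = ∑ rst ∈ (twoPartitions y μ).filter (fun rst => rst.2.2 = t),
        T i j k rst)
    (ρ : Fin n → Fin n → ℝ)
    (hρdef : ∀ i j : Fin n, i < j → ρ i j = ∑ r : Fin m', y r * P i j r)
    (hρdiag : ∀ i : Fin n, ρ i i = 0)
    (hρskew : ∀ i j : Fin n, ρ j i = -ρ i j) :
    (∀ i j k : Fin n, i < j → j < k → ρ i k = ρ i j + ρ j k) ∧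
    (∃ x : Fin n → ℝ, (∀ i j : Fin n, ρ i j = x j - x i) ∧
      ∀ x' : Fin n → ℝ, (∀ i j : Fin n, ρ i j = x' j - x' i) →
        ∃ c : ℝ, ∀ i : Fin n, x' i = x i + c) := by

  classical
  have key : ∀ i j k : Fin n, i < j → j < k → ρ i k = ρ i j + ρ j k := by
    intro i j k hij hjk
    have hik : i < k := hij.trans hjk
    set S := twoPartitions y μ with hS
    have hmem : ∀ rst ∈ S, y rst.1 + y rst.2.1 = y rst.2.2 := by
      intro rst hrst
      simp only [hS, twoPartitions, Finset.mem_filter] at hrst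
      exact hrst.2.1
    have hR : ∑ r : Fin m', y r * P i j r
        = ∑ rst ∈ S, y rst.1 * T i j k rst := by
      rw [← Finset.sum_fiberwise S (fun rst => rst.1)
        (fun rst => y rst.1 * T i j k rst)]
      refine Finset.sum_congr rfl (fun r _ => ?_)
      rw [hMargR i j k hij hjk r, Finset.mul_sum]
      refine Finset.sum_congr rfl (fun rst hrst => ?_)
      rw [(Finset.mem_filter.mp hrst).2]
    have hSs : ∑ s : Fin m', y s * P j k s
        = ∑ rst ∈ S, y rst.2.1 * T i j k rst := by
      rw [← Finset.sum_fiberwise S (fun rst => rst.2.1)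
        (fun rst => y rst.2.1 * T i j k rst)]
      refine Finset.sum_congr rfl (fun s _ => ?_)
      rw [hMargS i j k hij hjk s, Finset.mul_sum]
      refine Finset.sum_congr rfl (fun rst hrst => ?_)
      rw [(Finset.mem_filter.mp hrst).2]
    have hT : ∑ t : Fin m', y t * P i k t
        = ∑ rst ∈ S, y rst.2.2 * T i j k rst := by
      rw [← Finset.sum_fiberwise S (fun rst => rst.2.2)
        (fun rst => y rst.2.2 * T i j k rst)]
      refine Finset.sum_congr rfl (fun t _ => ?_)
      rw [hMargT i j k hij hjk t, Finset.mul_sum]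
      refine Finset.sum_congr rfl (fun rst hrst => ?_)
      rw [(Finset.mem_filter.mp hrst).2]
    rw [hρdef i k hik, hρdef i j hij, hρdef j k hjk, hR, hSs, hT,
      ← Finset.sum_add_distrib]
    refine Finset.sum_congr rfl (fun rst hrst => ?_)
    rw [← add_mul, hmem rst hrst]
  have add3 : ∀ a b c : Fin n, ρ a b + ρ b c = ρ a c := by
    intro a b c
    rcases lt_trichotomy a b with hab | hab | hab
    · rcases lt_trichotomy b c with hbc | hbc | hbc
      · exact (key a b c hab hbc).symm
      · subst hbc; rw [hρdiag]; ring
      · rcases lt_trichotomy a c with hac | hac | hac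
        · have := key a c b hac hbc
          have h2 := hρskew c b
          linarith
        · subst hac
          have := hρskew a b
          rw [hρdiag]; linarith
        · have := key c a b hac hab
          have h1 := hρskew c a
          have h2 := hρskew c b
          linarith
    · subst hab; rw [hρdiag]; ring
    · rcases lt_trichotomy b c with hbc | hbc | hbc
      · rcases lt_trichotomy a c with hac | hac | hac
        · have := key b a c hab hac
          have h1 := hρskew b a
          linarith
        · subst hac
          have := hρskew a b
          rw [hρdiag]; linarith
        · have := key b c a hbc hac
          have h1 := hρskew b a
          have h2 := hρskew c a
          linarith
      · subst hbc; rw [hρdiag]; ring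
      · have hac : c < a := hbc.trans hab
        have := key c b a hbc hab
        have h1 := hρskew b a
        have h2 := hρskew c b
        have h3 := hρskew c a
        linarith
  refine ⟨fun i j k hij hjk => key i j k hij hjk, ?_⟩
  rcases Nat.eq_zero_or_pos n with hn | hn
  · subst hn
    exact ⟨fun i => 0, fun i => i.elim0, fun x' _ => ⟨0, fun i => i.elim0⟩⟩
  · set i0 : Fin n := ⟨0, hn⟩
    refine ⟨fun j => ρ i0 j, fun i j => ?_, fun x' hx' => ?_⟩
    · have := add3 i0 i j
      linarith
    · refine ⟨x' i0 - ρ i0 i0, fun i => ?_⟩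
      have := hx' i0 i
      have h0 := hρdiag i0
      linarith
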